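/- Every linear hypergraph of rank at most r and minimum degree at least k²−k admits a (1/k)-majority (kr+1)-edge-colouring. -/

import Mathlib

open Finset

/-- Every linear hypergraph of rank at most `r` and minimum degree at least `k² − k`
admits a `(1/k)`-majority `(k·r+1)`-edge-colouring. -/
theorem majority_colouring_linear (V : Type) [Fintype V] [DecidableEq V]
    (E : Finset (Finset V)) (r k : ℕ) (hk : 2 ≤ k)
    (hE : ∀ e ∈ E, e.Nonempty ∧ e.card ≤ r)
    (hLin : ∀ e ∈ E, ∀ f ∈ E, e ≠ f → (e ∩ f).card ≤ 1)
    (hmin : ∀ v : V, k ^ 2 - k ≤ (E.filter (fun e => v ∈ e)).card) :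
    ∃ c : Finset V → Fin (k * r + 1),
      ∀ (v : V) (i : Fin (k * r + 1)),
        (E.filter (fun e => v ∈ e ∧ c e = i)).card
          ≤ (E.filter (fun e => v ∈ e)).card / k := by
  classical
  have hk0 : 0 < k := by omega
  have hm1 : ∀ v : V, k - 1 ≤ (E.filter (fun e => v ∈ e)).card / k := by
    intro v
    rw [Nat.le_div_iff_mul_le hk0, Nat.sub_mul, one_mul, ← sq]
    exact hmin v
  suffices h : ∀ S : Finset (Finset V), S ⊆ E →
      ∃ c : Finset V → Fin (k * r + 1),
        ∀ v i, (S.filter (fun e => v ∈ e ∧ c e = i)).card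
            ≤ (E.filter (fun e => v ∈ e)).card / k by
    exact h E Finset.Subset.rfl
  intro S
  induction S using Finset.induction_on with
  | empty =>
    exact fun _ => ⟨fun _ => ⟨0, Nat.succ_pos _⟩, fun v i => by rw [Finset.filter_empty, Finset.card_empty]; exact Nat.zero_le _⟩
  | @insert e S he ih =>
    intro hsub
    have heE : e ∈ E := hsub (mem_insert_self e S)
    have hSE : S ⊆ E := fun f hf => hsub (mem_insert_of_mem hf)
    obtain ⟨c, hc⟩ := ih hSE
    -- the set of colours forbidden at some vertex of `e`
    set B : Finset (Fin (k * r + 1)) := e.biUnion (fun v =>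
      univ.filter (fun i => (E.filter (fun f => v ∈ f)).card / k ≤
        (S.filter (fun f => v ∈ f ∧ c f = i)).card)) with hB
    have hBcard : B.card ≤ k * r := by
      calc B.card ≤ ∑ v ∈ e, (univ.filter (fun i =>
            (E.filter (fun f => v ∈ f)).card / k ≤
              (S.filter (fun f => v ∈ f ∧ c f = i)).card)).card :=
            Finset.card_biUnion_le
      _ ≤ ∑ _v ∈ e, k := by
          apply Finset.sum_le_sum
          intro v hv
          set d := (E.filter (fun f => v ∈ f)).card with hd
          set m := d / k with hm
          -- edges of S at v number at most d - 1, since e ∉ S is also at v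
          have hdegS : (S.filter (fun f => v ∈ f)).card ≤ d - 1 := by
            have hsub2 : S.filter (fun f => v ∈ f) ⊆
                (E.filter (fun f => v ∈ f)).erase e := by
              intro f hf
              rw [mem_filter] at hf
              refine Finset.mem_erase.2 ⟨?_, mem_filter.2 ⟨hSE hf.1, hf.2⟩⟩
              rintro rfl; exact he hf.1
            have h9 := Finset.card_le_card hsub2
            rwa [Finset.card_erase_of_mem (mem_filter.2 ⟨heE, hv⟩)] at h9
          have hsum : ∑ i : Fin (k * r + 1),
              (S.filter (fun f => v ∈ f ∧ c f = i)).card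
              = (S.filter (fun f => v ∈ f)).card := by
            rw [Finset.card_eq_sum_card_fiberwise
              (f := c) (t := univ) (fun x _ => mem_univ _)]
            apply Finset.sum_congr rfl
            intro i _
            rw [Finset.filter_filter]
          by_contra hcon
          push_neg at hcon
          set Bv := univ.filter (fun i =>
            m ≤ (S.filter (fun f => v ∈ f ∧ c f = i)).card) with hBv
          have h1 : Bv.card • m ≤ ∑ i ∈ Bv,
              (S.filter (fun f => v ∈ f ∧ c f = i)).card :=
            Finset.card_nsmul_le_sum _ _ _ (fun i hi => (mem_filter.1 hi).2)
          rw [smul_eq_mul] at h1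
          have h2 : ∑ i ∈ Bv, (S.filter (fun f => v ∈ f ∧ c f = i)).card
              ≤ ∑ i : Fin (k * r + 1),
                (S.filter (fun f => v ∈ f ∧ c f = i)).card :=
            Finset.sum_le_sum_of_subset (Finset.subset_univ _)
          have h3 : (k + 1) * m ≤ Bv.card * m := Nat.mul_le_mul_right m hcon
          have h7 : k - 1 ≤ m := hm1 v
          have h6 : d % k ≤ m := le_trans (Nat.le_pred_of_lt (Nat.mod_lt _ hk0)) h7
          have h4 : d ≤ (k + 1) * m := by
            calc d = k * m + d % k := by rw [hm]; exact (Nat.div_add_mod d k).symm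
            _ ≤ k * m + m := Nat.add_le_add_left h6 _
            _ = (k + 1) * m := by ring
          have h8 : ∑ i : Fin (k * r + 1),
              (S.filter (fun f => v ∈ f ∧ c f = i)).card ≤ d - 1 := by
            rw [hsum]; exact hdegS
          have hd2 : 2 ≤ d := by
            have h10 := hmin v
            have h11 : 2 ≤ k ^ 2 - k := by
              have hkle : k ≤ k ^ 2 := Nat.le_self_pow two_ne_zero k
              rw [Nat.le_sub_iff_add_le hkle]
              nlinarith
            omega
          have : d ≤ d - 1 := h4.trans (h3.trans (h1.trans (h2.trans h8)))
          omega
      _ = e.card * k := by rw [Finset.sum_const, smul_eq_mul]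
      _ ≤ r * k := Nat.mul_le_mul_right k (hE e heE).2
      _ = k * r := Nat.mul_comm r k
    -- pick a colour outside B
    obtain ⟨i, hiB⟩ : ∃ i : Fin (k * r + 1), i ∉ B := by
      by_contra hall
      push_neg at hall
      have h12 : (univ : Finset (Fin (k * r + 1))) ⊆ B := fun j _ => hall j
      have h13 := Finset.card_le_card h12
      rw [Finset.card_univ, Fintype.card_fin] at h13
      omega
    refine ⟨Function.update c e i, ?_⟩
    intro v j
    have hfilter : ∀ j' : Fin (k * r + 1),
        S.filter (fun f => v ∈ f ∧ Function.update c e i f = j')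
          = S.filter (fun f => v ∈ f ∧ c f = j') := by
      intro j'
      apply Finset.filter_congr
      intro f hf
      have : Function.update c e i f = c f :=
        Function.update_of_ne (by rintro rfl; exact he hf) _ _
      simp [this]
    rw [Finset.filter_insert]
    split_ifs with hcond
    · obtain ⟨hve, hij⟩ := hcond
      rw [Function.update_self] at hij
      subst hij
      rw [Finset.card_insert_of_notMem
        (fun hmem => he (Finset.mem_filter.1 hmem).1), hfilter]
      have hlt : (S.filter (fun f => v ∈ f ∧ c f = i)).card
          < (E.filter (fun f => v ∈ f)).card / k := by
        by_contra hge
        push_neg at hge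
        exact hiB (Finset.mem_biUnion.2
          ⟨v, hve, Finset.mem_filter.2 ⟨mem_univ _, hge⟩⟩)
      omega
    · rw [hfilter]
      exact hc v j
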